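/- Let (S,L) be a Lie-Rinehart algebra over R with L free of finite rank d as an S-module with basis (α_1,…,α_d), and let φ_L = α_1* ∧ ⋯ ∧ α_d* be the corresponding generator of Λ^d_S L^∨. Then the right U-action on Λ^d_S L^∨ given by φ·α = −λ_α(φ) (with λ_α the Lie derivative) satisfies φ_L·α = Tr(ad_α)·φ_L for every α ∈ L, where ad_α : L → L, β ↦ [α,β], is S-linear up to the anchor term and Tr(ad_α) denotes the trace of the matrix (s^α_{jk}) defined by [α, α_k] = Σ_j s^α_{jk} α_j. -/

import Mathlib

open Finset Matrix

private lemma deriv_prod {R S : Type*} [CommRing R] [CommRing S] [Algebra R S]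
    (D : Derivation R S S) {ι : Type*} [DecidableEq ι] (t : Finset ι) (f : ι → S) :
    D (∏ i ∈ t, f i) = ∑ i ∈ t, D (f i) * ∏ j ∈ t.erase i, f j := by
  induction t using Finset.induction_on with
  | empty => simp
  | insert a t ha ih =>
    rw [Finset.prod_insert ha, Derivation.leibniz, smul_eq_mul, smul_eq_mul, ih,
      Finset.sum_insert ha, Finset.erase_insert ha, Finset.mul_sum]
    rw [mul_comm (D (f a)) _, add_comm]
    congr 1
    apply Finset.sum_congr rfl
    intro i hi
    rw [Finset.erase_insert_of_ne (by rintro rfl; exact ha hi), Finset.prod_insert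
      (fun h => ha (Finset.mem_of_mem_erase h))]
    ring

private lemma deriv_det {R S : Type*} [CommRing R] [CommRing S] [Algebra R S]
    (D : Derivation R S S) {d : ℕ} (A : Matrix (Fin d) (Fin d) S) :
    D A.det = ∑ i : Fin d, ∑ k : Fin d,
      D (A k i) * (A.updateCol i (Pi.single k 1)).det := by
  have hD0 : ∀ n : ℤ, D ((n : S)) = 0 := fun n => by
    rw [show ((n : S)) = n • (1 : S) from (zsmul_one n).symm, map_zsmul,
      Derivation.map_one_eq_zero, smul_zero]
  rw [Matrix.det_apply', map_sum]
  have h1 : ∀ σ : Equiv.Perm (Fin d),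
      D (((Equiv.Perm.sign σ : ℤ) : S) * ∏ i, A (σ i) i)
      = ∑ i, ((Equiv.Perm.sign σ : ℤ) : S) *
          (D (A (σ i) i) * ∏ j ∈ Finset.univ.erase i, A (σ j) j) := by
    intro σ
    rw [Derivation.leibniz, smul_eq_mul, smul_eq_mul, hD0, mul_zero, add_zero,
      deriv_prod, Finset.mul_sum]
  simp_rw [h1]
  rw [Finset.sum_comm]
  refine Finset.sum_congr rfl fun i _ => ?_
  have hdet : ∀ k : Fin d, (A.updateCol i (Pi.single k 1)).det
      = ∑ σ : Equiv.Perm (Fin d), ((Equiv.Perm.sign σ : ℤ) : S) *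
          ((if σ i = k then (1:S) else 0) * ∏ j ∈ Finset.univ.erase i, A (σ j) j) := by
    intro k
    rw [Matrix.det_apply']
    refine Finset.sum_congr rfl fun σ _ => ?_
    congr 1
    rw [← Finset.mul_prod_erase Finset.univ _ (Finset.mem_univ i)]
    congr 1
    · rw [Matrix.updateCol_apply, if_pos rfl, Pi.single_apply]
    · refine Finset.prod_congr rfl fun j hj => ?_
      rw [Matrix.updateCol_apply, if_neg (Finset.ne_of_mem_erase hj)]
  simp_rw [hdet, Finset.mul_sum]
  rw [Finset.sum_comm]
  refine Finset.sum_congr rfl fun σ _ => ?_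
  rw [Finset.sum_eq_single (σ i)]
  · rw [if_pos rfl]; ring
  · intro k _ hk
    rw [if_neg (fun h => hk h.symm)]
    ring
  · intro h
    exact absurd (Finset.mem_univ _) h

private lemma cramer_col {S : Type*} [CommRing S] {d : ℕ} (A : Matrix (Fin d) (Fin d) S)
    (k j : Fin d) :
    ∑ i : Fin d, A k i * (A.updateCol i (Pi.single j 1)).det
      = if j = k then A.det else 0 := by
  have h : ∀ i, (A.updateCol i (Pi.single j 1)).det = (Aᵀ).adjugate j i := by
    intro i
    rw [Matrix.adjugate_apply, Matrix.updateRow_transpose, Matrix.det_transpose]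
  simp_rw [h]
  have h2 : (Aᵀ.adjugate * Aᵀ) j k = (Aᵀ.det • (1 : Matrix (Fin d) (Fin d) S)) j k := by
    rw [Matrix.adjugate_mul]
  rw [Matrix.mul_apply] at h2
  simp only [Matrix.transpose_apply] at h2
  rw [show (∑ i, A k i * (Aᵀ.adjugate) j i) = ∑ i, Aᵀ.adjugate j i * A k i from
    Finset.sum_congr rfl fun i _ => mul_comm _ _, h2]
  simp [Matrix.one_apply, Matrix.det_transpose, mul_comm]

/-- Let `(S,L)` be a Lie-Rinehart algebra over `R` with `L` free of finite
rank `d` over `S` with basis `b = (α_1,…,α_d)`, and let `φ_L = α_1* ∧ ⋯ ∧ α_d*` be the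
corresponding generator of `Λ^d_S L^∨`, realised as the determinant form `b.det`.  Then
the right `U`-action `φ·α = −λ_α(φ)` on `Λ^d_S L^∨`, where
`(λ_α φ)(β_1,…,β_d) = ∂_α(φ(β)) − Σ_i φ(β_1,…,⁅α,β_i⁆,…,β_d)`, satisfies
`φ_L·α = Tr(ad_α)·φ_L`, with `Tr(ad_α) = Σ_j s_{jj}` for `⁅α,α_k⁆ = Σ_j s_{jk} α_j`. -/
theorem stmt16 {R S L : Type*} [CommRing R] [CommRing S] [Algebra R S]
    [LieRing L] [LieAlgebra R L] [Module S L]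
    (D : L → Derivation R S S)
    (hDsmul : ∀ (s : S) (α : L), D (s • α) = s • D α)
    (hLeib : ∀ (s : S) (α β : L), ⁅α, s • β⁆ = s • ⁅α, β⁆ + (D α s) • β)
    {d : ℕ} (b : Module.Basis (Fin d) S L) :
    ∀ (α : L) (β : Fin d → L),
      -(D α (b.det β) - ∑ i : Fin d, b.det (Function.update β i ⁅α, β i⁆))
        = (∑ j : Fin d, b.repr ⁅α, b j⁆ j) * b.det β := by
  intro α β
  classical
  set A := b.toMatrix β with hA
  have hAki : ∀ k i, A k i = b.repr (β i) k := fun k i => rfl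
  have hdetβ : b.det β = A.det := b.det_apply β
  have hEb : ∀ i j, b.det (Function.update β i (b j))
      = (A.updateCol i (Pi.single j 1)).det := by
    intro i j
    rw [Module.Basis.det_apply, Module.Basis.toMatrix_update, Module.Basis.repr_self,
      Finsupp.single_eq_pi_single]
  have hbr : ∀ γ : L, ⁅α, γ⁆
      = ∑ k, (b.repr γ k • ⁅α, b k⁆ + D α (b.repr γ k) • b k) := by
    intro γ
    conv_lhs => rw [← b.sum_repr γ]
    refine (map_sum (AddMonoidHom.mk' (fun x : L => ⁅α, x⁆) (fun x y => lie_add α x y))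
      (fun i => b.repr γ i • b i) Finset.univ).trans ?_
    exact Finset.sum_congr rfl fun k _ => hLeib _ _ _
  have hterm : ∀ i, b.det (Function.update β i ⁅α, β i⁆)
      = (∑ k, ∑ j, b.repr (β i) k * (b.repr ⁅α, b k⁆ j *
          b.det (Function.update β i (b j))))
        + ∑ k, D α (b.repr (β i) k) * b.det (Function.update β i (b k)) := by
    intro i
    rw [hbr (β i), AlternatingMap.map_update_sum]
    simp_rw [AlternatingMap.map_update_add, AlternatingMap.map_update_smul, smul_eq_mul]
    rw [Finset.sum_add_distrib]
    congr 1
    refine Finset.sum_congr rfl fun k _ => ?_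
    conv_lhs => rw [show (⁅α, b k⁆) = ∑ j, b.repr ⁅α, b k⁆ j • b j from (b.sum_repr _).symm]
    rw [AlternatingMap.map_update_sum, Finset.mul_sum]
    refine Finset.sum_congr rfl fun j _ => ?_
    rw [AlternatingMap.map_update_smul, smul_eq_mul]
  have hDdet : D α (b.det β)
      = ∑ i, ∑ k, D α (b.repr (β i) k) * b.det (Function.update β i (b k)) := by
    rw [hdetβ, deriv_det]
    exact Finset.sum_congr rfl fun i _ => Finset.sum_congr rfl fun k _ => by
      rw [hEb, hAki]
  have hY : (∑ i, ∑ k, ∑ j, b.repr (β i) k * (b.repr ⁅α, b k⁆ j *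
        b.det (Function.update β i (b j))))
      = (∑ j, b.repr ⁅α, b j⁆ j) * b.det β := by
    rw [Finset.sum_comm]
    have hswap : ∀ k, (∑ i, ∑ j, b.repr (β i) k * (b.repr ⁅α, b k⁆ j *
          b.det (Function.update β i (b j))))
        = ∑ j, b.repr ⁅α, b k⁆ j *
            ∑ i, b.repr (β i) k * b.det (Function.update β i (b j)) := by
      intro k
      rw [Finset.sum_comm]
      refine Finset.sum_congr rfl fun j _ => ?_
      rw [Finset.mul_sum]
      exact Finset.sum_congr rfl fun i _ => by ring
    simp_rw [hswap]
    have hc : ∀ k j, (∑ i, b.repr (β i) k * b.det (Function.update β i (b j)))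
        = if j = k then b.det β else 0 := by
      intro k j
      simp_rw [hEb, ← hAki]
      rw [hdetβ]
      exact cramer_col A k j
    simp_rw [hc]
    rw [Finset.sum_mul]
    refine Finset.sum_congr rfl fun k _ => ?_
    rw [Finset.sum_eq_single k]
    · rw [if_pos rfl]
    · intro j _ hj
      rw [if_neg hj, mul_zero]
    · intro h
      exact absurd (Finset.mem_univ _) h
  simp_rw [hterm]
  rw [Finset.sum_add_distrib, hDdet]
  linear_combination hY
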